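/- Let G be a compact abelian topological group, let W ∈ F₁ and let u : ℕ → G be a sequence that is well distributed (with respect to the normalized Haar measure on G) with respect to the uniform Riesz mean UW. Then for every g : ℕ → G with lim_{n→∞} g(n) = 0 (the identity of G), the sequence n ↦ u(n) + g(n) is also well distributed with respect to UW. -/

import Mathlib

open Filter MeasureTheory Finset
open scoped ENNReal Classical

noncomputable section

/-- Discrete derivative (first order difference) of a real sequence. -/
def dd (f : ℕ → ℝ) : ℕ → ℝ := fun n => f (n + 1) - f n

/-- Discrete derivative of an integer sequence. -/
def ddZ (f : ℕ → ℤ) : ℕ → ℤ := fun n => f (n + 1) - f n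

/-- Membership in the class `F_ℓ`:  `F₀` consists of eventually monotone sequences tending
to `0` whose series diverges in absolute value; `F_{ℓ+1} = {f : Δf ∈ F_ℓ}`. -/
def MemF : ℕ → (ℕ → ℝ) → Prop
  | 0 => fun f =>
      (∃ N : ℕ, (∀ m n, N ≤ m → m ≤ n → f m ≤ f n) ∨ (∀ m n, N ≤ m → m ≤ n → f n ≤ f m)) ∧
      Tendsto f atTop (nhds 0) ∧
      Tendsto (fun N => |∑ n ∈ Finset.Icc 1 N, f n|) atTop atTop
  | (ℓ + 1) => fun f => MemF ℓ (dd f)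

/-- `R ⊆ ℕ` is `W`-syndetic. -/
def WSyndetic (W : ℕ → ℝ) (R : Set ℕ) : Prop :=
  ∃ l : ℕ, ∀ M N : ℕ, M ≤ N → (l : ℝ) ≤ W N - W M →
    1 ≤ ∑ n ∈ Finset.Icc M N, Set.indicator R (dd W) n

/-- `R ⊆ ℕ` is thick: it contains arbitrarily long intervals. -/
def Thick (R : Set ℕ) : Prop := ∀ k : ℕ, ∃ a : ℕ, ∀ i ≤ k, a + i ∈ R

/-- The uniform Riesz mean (with respect to `W`) of the sequence `a` equals `L`. -/
def UWLim {E : Type*} [NormedAddCommGroup E] [NormedSpace ℝ E]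
    (W : ℕ → ℝ) (a : ℕ → E) (L : E) : Prop :=
  ∀ ε : ℝ, 0 < ε → ∃ l : ℕ, ∀ M N : ℕ, M ≤ N → (l : ℝ) ≤ W N - W M →
    ‖(W N - W M)⁻¹ • ∑ n ∈ Finset.Icc M N, dd W n • a n - L‖ < ε

/-- `x : ℕ → G` is `μ`-well distributed with respect to the uniform Riesz mean along `W`. -/
def WellDistributed {G : Type*} [TopologicalSpace G] [MeasurableSpace G]
    (W : ℕ → ℝ) (x : ℕ → G) (μ : Measure G) : Prop :=
  ∀ F : C(G, ℂ), UWLim W (fun n => F (x n)) (∫ g, F g ∂μ)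

/-- `p(Δ)f` for an integer polynomial `p`. -/
def polyDelta (p : Polynomial ℤ) (f : ℕ → ℝ) : ℕ → ℝ :=
  fun n => ∑ j ∈ Finset.range (p.natDegree + 1), (p.coeff j : ℝ) * dd^[j] f n

/-- `E ⊆ ℕ` has positive upper Banach density. -/
def PosUpperBanach (E : Set ℕ) : Prop :=
  0 < Filter.limsup (fun N : ℕ =>
    ⨆ M : ℕ, (∑ n ∈ Finset.Ico M (M + N), Set.indicator E (fun _ => (1 : ℝ)) n) / N) atTop

/-- Telescoping sum of the discrete derivative. -/
lemma dd_telescope (W : ℕ → ℝ) : ∀ a b : ℕ, a ≤ b →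
    ∑ n ∈ Finset.Ico a b, dd W n = W b - W a := by
  intro a b h
  induction b with
  | zero => simp [Nat.le_zero.mp h]
  | succ b ih =>
    rcases Nat.lt_or_ge a (b + 1) with h' | h'
    · have hab : a ≤ b := Nat.lt_succ_iff.mp h'
      rw [Finset.sum_Ico_succ_top hab, ih hab, dd]; ring
    · have : a = b + 1 := le_antisymm h h'
      subst this; simp

/-- A sequence tending to `0` has uniform Riesz mean `0`. -/
lemma uwlim_of_tendsto_zero (W : ℕ → ℝ) (hW : MemF 1 W) (c : ℕ → ℂ)
    (hc : Tendsto c atTop (nhds 0)) : UWLim W c 0 := by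
  obtain ⟨⟨N₀, hcase⟩, hv0, -⟩ := (hW : MemF 0 (dd W))
  have hsign : ∃ σ : ℝ, |σ| = 1 ∧ ∀ n, N₀ ≤ n → 0 ≤ σ * dd W n := by
    rcases hcase with h | h
    · refine ⟨-1, by norm_num, fun n hn => ?_⟩
      have h0 : dd W n ≤ 0 :=
        ge_of_tendsto hv0 (eventually_atTop.2 ⟨n, fun m hm => h n m hn hm⟩)
      linarith
    · refine ⟨1, by norm_num, fun n hn => ?_⟩
      have h0 : 0 ≤ dd W n :=
        le_of_tendsto hv0 (eventually_atTop.2 ⟨n, fun m hm => h n m hn hm⟩)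
      linarith
  obtain ⟨σ, hσ1, hσ⟩ := hsign
  intro ε hε
  have hε4 : 0 < ε / 4 := by linarith
  have hcn : ∀ᶠ n in atTop, ‖c n‖ < ε / 4 := by
    have h := hc.norm
    rw [norm_zero] at h
    exact h.eventually_lt_const hε4
  obtain ⟨n₁, hn₁⟩ := eventually_atTop.mp hcn
  have hvn : ∀ᶠ n in atTop, |dd W n| < 1 := by
    have h := hv0.abs
    rw [abs_zero] at h
    exact h.eventually_lt_const one_pos
  obtain ⟨n₂, hn₂⟩ := eventually_atTop.mp hvn
  set n₀ := max N₀ (max n₁ n₂) with hn₀def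
  set C := ∑ n ∈ Finset.range n₀, |dd W n| * (‖c n‖ + 1) with hCdef
  have hC0 : 0 ≤ C := Finset.sum_nonneg fun n _ => by positivity
  obtain ⟨l, hl⟩ := exists_nat_ge (max 1 ((C + ε / 4 * (1 + C)) / (ε / 4)))
  refine ⟨l, fun M N hMN hlW => ?_⟩
  set D := W N - W M with hDdef
  have hD1 : (1 : ℝ) ≤ D := le_trans (le_trans (le_max_left _ _) hl) hlW
  have hDdiv : (C + ε / 4 * (1 + C)) / (ε / 4) ≤ D :=
    le_trans (le_trans (le_max_right _ _) hl) hlW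
  have hD0 : (0 : ℝ) < D := lt_of_lt_of_le one_pos hD1
  set m := max M n₀ with hmdef
  -- split the sum
  have hsplit : ∑ n ∈ Finset.Icc M N, dd W n • c n =
      (∑ n ∈ (Finset.Icc M N).filter (fun n => n < n₀), dd W n • c n) +
      ∑ n ∈ Finset.Icc m N, dd W n • c n := by
    rw [← Finset.sum_filter_add_sum_filter_not (Finset.Icc M N) (fun n => n < n₀)]
    congr 1
    apply Finset.sum_congr _ fun _ _ => rfl
    ext x
    simp only [Finset.mem_filter, Finset.mem_Icc, not_lt, hmdef, max_le_iff]
    omega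
  -- range n₀ bound
  have hrange : ∑ n ∈ Finset.range n₀, |dd W n| ≤ C := by
    apply Finset.sum_le_sum
    intro n _
    nlinarith [abs_nonneg (dd W n), norm_nonneg (c n)]
  -- first part
  have h1 : ‖∑ n ∈ (Finset.Icc M N).filter (fun n => n < n₀), dd W n • c n‖ ≤ C := by
    calc ‖∑ n ∈ (Finset.Icc M N).filter (fun n => n < n₀), dd W n • c n‖
        ≤ ∑ n ∈ (Finset.Icc M N).filter (fun n => n < n₀), ‖dd W n • c n‖ :=
          norm_sum_le _ _
      _ ≤ ∑ n ∈ (Finset.Icc M N).filter (fun n => n < n₀), |dd W n| * (‖c n‖ + 1) := by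
          apply Finset.sum_le_sum
          intro n _
          rw [norm_smul, Real.norm_eq_abs]
          nlinarith [abs_nonneg (dd W n), norm_nonneg (c n)]
      _ ≤ C := by
          apply Finset.sum_le_sum_of_subset_of_nonneg
          · intro x hx
            simp only [Finset.mem_filter, Finset.mem_Icc] at hx
            exact Finset.mem_range.mpr hx.2
          · intro n _ _; positivity
  -- second part
  have h2 : ‖∑ n ∈ Finset.Icc m N, dd W n • c n‖ ≤ ε / 4 * (1 + D + C) := by
    by_cases hmN : m ≤ N
    · have hn₀N : n₀ ≤ N := le_trans (le_max_right _ _) hmN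
      have htail : ∑ n ∈ Finset.Icc m N, |dd W n| ≤ 1 + D + C := by
        have habs : ∀ n ∈ Finset.Icc m N, |dd W n| = σ * dd W n := by
          intro n hn
          have hnN₀ : N₀ ≤ n := by
            have := (Finset.mem_Icc.mp hn).1
            omega
          have h0 := hσ n hnN₀
          have : |σ * dd W n| = σ * dd W n := abs_of_nonneg h0
          rw [abs_mul, hσ1, one_mul] at this
          exact this
        rw [Finset.sum_congr rfl habs, ← Finset.mul_sum]
        have htel : ∑ n ∈ Finset.Icc m N, dd W n = W (N + 1) - W m := by
          rw [← Finset.Ico_add_one_right_eq_Icc]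
          exact dd_telescope W m (N + 1) (by omega)
        rw [htel]
        -- W (N+1) - W m = dd W N + D - (W m - W M)
        have hWm : |W m - W M| ≤ C := by
          have htel2 : ∑ n ∈ Finset.Ico M m, dd W n = W m - W M :=
            dd_telescope W M m (le_max_left _ _)
          rw [← htel2]
          calc |∑ n ∈ Finset.Ico M m, dd W n| ≤ ∑ n ∈ Finset.Ico M m, |dd W n| :=
                Finset.abs_sum_le_sum_abs _ _
            _ ≤ ∑ n ∈ Finset.range n₀, |dd W n| := by
                apply Finset.sum_le_sum_of_subset_of_nonneg
                · intro x hx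
                  simp only [Finset.mem_Ico, hmdef] at hx
                  simp only [Finset.mem_range]
                  omega
                · intro n _ _; exact abs_nonneg _
            _ ≤ C := hrange
        have hvN : |dd W N| ≤ 1 := le_of_lt (hn₂ N (by omega))
        have e1 : σ * dd W N ≤ |dd W N| := by
          calc σ * dd W N ≤ |σ * dd W N| := le_abs_self _
            _ = |dd W N| := by rw [abs_mul, hσ1, one_mul]
        have e2 : σ * (W N - W M) ≤ D := by
          calc σ * (W N - W M) ≤ |σ * (W N - W M)| := le_abs_self _
            _ = |W N - W M| := by rw [abs_mul, hσ1, one_mul]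
            _ = D := abs_of_pos hD0
        have e3 : -(σ * (W m - W M)) ≤ C := by
          calc -(σ * (W m - W M)) ≤ |σ * (W m - W M)| := neg_le_abs _
            _ = |W m - W M| := by rw [abs_mul, hσ1, one_mul]
            _ ≤ C := hWm
        have : W (N + 1) - W m = dd W N + (W N - W M) - (W m - W M) := by
          simp only [dd]; ring
        rw [this]
        nlinarith [e1, e2, e3, hvN]
      calc ‖∑ n ∈ Finset.Icc m N, dd W n • c n‖
          ≤ ∑ n ∈ Finset.Icc m N, ‖dd W n • c n‖ := norm_sum_le _ _
        _ ≤ ∑ n ∈ Finset.Icc m N, ε / 4 * |dd W n| := by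
            apply Finset.sum_le_sum
            intro n hn
            have hn1 : n₁ ≤ n := by
              have := (Finset.mem_Icc.mp hn).1
              omega
            have hcnorm : ‖c n‖ ≤ ε / 4 := le_of_lt (hn₁ n hn1)
            rw [norm_smul, Real.norm_eq_abs]
            nlinarith [abs_nonneg (dd W n)]
        _ = ε / 4 * ∑ n ∈ Finset.Icc m N, |dd W n| := by rw [Finset.mul_sum]
        _ ≤ ε / 4 * (1 + D + C) := by
            apply mul_le_mul_of_nonneg_left htail (le_of_lt hε4)
    · push_neg at hmN
      rw [Finset.Icc_eq_empty (by omega), Finset.sum_empty, norm_zero]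
      nlinarith
  -- conclude
  have hS : ‖∑ n ∈ Finset.Icc M N, dd W n • c n‖ ≤ C + ε / 4 * (1 + D + C) := by
    rw [hsplit]
    calc ‖_ + _‖ ≤ _ + _ := norm_add_le _ _
      _ ≤ C + ε / 4 * (1 + D + C) := add_le_add h1 h2
  rw [sub_zero, norm_smul, norm_inv, Real.norm_eq_abs, abs_of_pos hD0]
  have hkey : C + ε / 4 * (1 + C) ≤ D * (ε / 4) := (div_le_iff₀ hε4).mp hDdiv
  have hbound : D⁻¹ * ‖∑ n ∈ Finset.Icc M N, dd W n • c n‖ ≤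
      D⁻¹ * (C + ε / 4 * (1 + D + C)) :=
    mul_le_mul_of_nonneg_left hS (by positivity)
  refine lt_of_le_of_lt hbound ?_
  rw [inv_mul_lt_iff₀ hD0]
  nlinarith

/-- Riesz means are additive. -/
lemma uwlim_add (W : ℕ → ℝ) (b c : ℕ → ℂ) (L : ℂ)
    (hb : UWLim W b L) (hc : UWLim W c 0) : UWLim W (fun n => b n + c n) L := by
  intro ε hε
  obtain ⟨l₁, h₁⟩ := hb (ε / 2) (by linarith)
  obtain ⟨l₂, h₂⟩ := hc (ε / 2) (by linarith)
  refine ⟨max l₁ l₂, fun M N hMN hl => ?_⟩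
  have c₁ : (l₁ : ℝ) ≤ W N - W M :=
    le_trans (by exact_mod_cast Nat.cast_le.mpr (le_max_left l₁ l₂)) hl
  have c₂ : (l₂ : ℝ) ≤ W N - W M :=
    le_trans (by exact_mod_cast Nat.cast_le.mpr (le_max_right l₁ l₂)) hl
  have e₁ := h₁ M N hMN c₁
  have e₂ := h₂ M N hMN c₂
  have hre : (W N - W M)⁻¹ • ∑ n ∈ Finset.Icc M N, dd W n • (b n + c n) - L =
      ((W N - W M)⁻¹ • ∑ n ∈ Finset.Icc M N, dd W n • b n - L) +
      ((W N - W M)⁻¹ • ∑ n ∈ Finset.Icc M N, dd W n • c n - 0) := by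
    rw [show (∑ n ∈ Finset.Icc M N, dd W n • (b n + c n)) =
        (∑ n ∈ Finset.Icc M N, dd W n • b n) + ∑ n ∈ Finset.Icc M N, dd W n • c n from by
      rw [← Finset.sum_add_distrib]
      exact Finset.sum_congr rfl fun n _ => smul_add _ _ _]
    rw [smul_add]
    abel
  calc ‖(W N - W M)⁻¹ • ∑ n ∈ Finset.Icc M N, dd W n • (b n + c n) - L‖
      = ‖((W N - W M)⁻¹ • ∑ n ∈ Finset.Icc M N, dd W n • b n - L) +
        ((W N - W M)⁻¹ • ∑ n ∈ Finset.Icc M N, dd W n • c n - 0)‖ := by rw [hre]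
    _ ≤ _ + _ := norm_add_le _ _
    _ < ε / 2 + ε / 2 := add_lt_add e₁ e₂
    _ = ε := by ring

/-- Well distribution is robust under perturbations tending to `0`: if `u` is well
distributed w.r.t. the uniform Riesz mean along `W` and `g(n) → 0`, then `u + g` is well
distributed as well (the normalized Haar measure `μG` is characterized as a
translation-invariant probability measure). -/
theorem stmt12 {G : Type*} [AddCommGroup G] [TopologicalSpace G] [IsTopologicalAddGroup G]
    [CompactSpace G] [MeasurableSpace G] [BorelSpace G]
    (μG : Measure G) [IsProbabilityMeasure μG]
    (hinv : ∀ g : G, Measure.map (fun x => g + x) μG = μG)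
    (W : ℕ → ℝ) (hW : MemF 1 W) (u : ℕ → G) (hu : WellDistributed W u μG)
    (g : ℕ → G) (hg : Tendsto g atTop (nhds 0)) :
    WellDistributed W (fun n => u n + g n) μG := by
  intro F
  have key : Tendsto (fun n => (F (u n + g n) : ℂ) - F (u n)) atTop (nhds 0) := by
    letI : UniformSpace G := IsTopologicalAddGroup.rightUniformSpace G
    haveI : IsUniformAddGroup G := isUniformAddGroup_of_addCommGroup
    have hF : UniformContinuous (F : G → ℂ) :=
      CompactSpace.uniformContinuous_of_continuous F.continuous
    have hpair : Tendsto (fun n => (u n, u n + g n)) atTop (uniformity G) := by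
      rw [uniformity_eq_comap_nhds_zero G, tendsto_comap_iff]
      simpa [Function.comp_def] using hg
    have h2 : Tendsto (fun n => ((F (u n) : ℂ), (F (u n + g n) : ℂ))) atTop (uniformity ℂ) :=
      Filter.Tendsto.comp hF hpair
    rw [uniformity_eq_comap_nhds_zero ℂ, tendsto_comap_iff] at h2
    exact h2
  have hb := hu F
  have hc := uwlim_of_tendsto_zero W hW _ key
  have := uwlim_add W _ _ _ hb hc
  have heq : (fun n => (F (u n) : ℂ) + (F (u n + g n) - F (u n))) =
      fun n => (F (u n + g n) : ℂ) := by
    funext n; ring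
  rwa [heq] at this
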